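/- Let G be a finite directed acyclic graph with positive real edge weights, and let V_i = {u_1,…,u_N}, V_{r-i} = {v_1,…,v_N} be two sets of N vertices each. Define the path matrix C with C_{jk} = sum of products of edge weights over all directed paths from u_k to v_j. Then det(C) equals the signed sum over vertex-disjoint path systems: det(C) = Σ_{P vertex-disjoint} sgn(σ_P)·ω(P), where a path system consists of a permutation σ and paths P_a : u_a → v_{σ(a)}, vertex-disjoint meaning no two paths share a vertex, and ω(P) is the product of all edge weights used. -/

import Mathlib

/-- A path in a directed graph `E` from `a` to `b`, recorded as the list `p` of
vertices following `a`; the empty list is the trivial path (requiring `a = b`). -/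
def IsDiPath {V : Type*} (E : V → V → Prop) (a b : V) (p : List V) : Prop :=
  List.Chain E a p ∧ (a :: p).getLast (by simp) = b

/-- The weight of the path `a :: p`: the product of the weights of its edges. -/
def pathWeight {V : Type*} (ω : V → V → ℝ) (a : V) (p : List V) : ℝ :=
  (((a :: p).zip p).map fun q => ω q.1 q.2).prod

noncomputable section
namespace LGVAux
open List Classical

variable {V : Type*}

/-- weight of a full vertex list -/
def W (ω : V → V → ℝ) (l : List V) : ℝ := ((l.zip l.tail).map fun q => ω q.1 q.2).prod

lemma pathWeight_eq (ω : V → V → ℝ) (a : V) (p : List V) : pathWeight ω a p = W ω (a :: p) := rfl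

lemma W_nil (ω : V → V → ℝ) : W ω [] = 1 := rfl
lemma W_single (ω : V → V → ℝ) (a : V) : W ω [a] = 1 := rfl
lemma W_cons_cons (ω : V → V → ℝ) (a b : V) (l : List V) :
    W ω (a :: b :: l) = ω a b * W ω (b :: l) := rfl

lemma W_append (ω : V → V → ℝ) (x : V) :
    ∀ (l₁ l₂ : List V), W ω (l₁ ++ x :: l₂) = W ω (l₁ ++ [x]) * W ω (x :: l₂)
  | [], l₂ => by simp [W_single]
  | [a], l₂ => by
      show W ω (a :: x :: l₂) = W ω (a :: [x]) * W ω (x :: l₂)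
      rw [W_cons_cons, W_cons_cons, W_single, mul_one]
  | a :: b :: l₁, l₂ => by
      show W ω (a :: b :: (l₁ ++ x :: l₂)) = W ω (a :: b :: (l₁ ++ [x])) * W ω (x :: l₂)
      rw [W_cons_cons, W_cons_cons, show b :: (l₁ ++ x :: l₂) = (b :: l₁) ++ x :: l₂ from rfl,
        W_append ω x (b :: l₁) l₂, mul_assoc]
      rfl

lemma chain_transGen {E : V → V → Prop} {a b : V} {p : List V}
    (h : List.Chain E a p) (hb : b ∈ p) : Relation.TransGen E a b := by
  induction p generalizing a with
  | nil => simp at hb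
  | cons c p ih =>
    rcases List.chain_cons.mp h with ⟨hac, hcp⟩
    rcases List.mem_cons.mp hb with rfl | hb
    · exact Relation.TransGen.single hac
    · exact Relation.TransGen.head hac (ih hcp hb)

lemma nodup_of_chain {E : V → V → Prop} (hacyc : Irreflexive (Relation.TransGen E))
    {a : V} {p : List V} (h : List.Chain E a p) : (a :: p).Nodup := by
  induction p generalizing a with
  | nil => simp
  | cons c p ih =>
    rcases List.chain_cons.mp h with ⟨hac, hcp⟩
    refine List.nodup_cons.mpr ⟨fun ha => ?_, ih hcp⟩
    exact hacyc a (chain_transGen (List.chain_cons.mpr ⟨hac, hcp⟩) ha)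

lemma paths_finite [Fintype V] {E : V → V → Prop} (hacyc : Irreflexive (Relation.TransGen E))
    (a b : V) : {p : List V | IsDiPath E a b p}.Finite := by
  apply (List.finite_length_le V (Fintype.card V)).subset
  intro p hp
  have hn : (a :: p).Nodup := nodup_of_chain hacyc hp.1
  have := hn.length_le_card
  simpa using Nat.le_of_succ_le (by simpa using this)

section Sel
variable [DecidableEq V] {N : ℕ} (u : Fin N → V)

/-- helper: computing takeWhile/dropWhile on a split list -/
lemma takeWhile_split {p : V → Bool} {c : List V} {y : V} (t : List V)
    (h1 : ∀ z ∈ c, p z = true) (h2 : p y = false) :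
    (c ++ y :: t).takeWhile p = c ∧ (c ++ y :: t).dropWhile p = y :: t := by
  constructor
  · rw [List.takeWhile_append_of_pos h1, List.takeWhile_cons_of_neg (by simp [h2]), List.append_nil]
  · rw [List.dropWhile_append]
    have h3 : c.dropWhile p = [] := List.dropWhile_eq_nil_iff.mpr (fun z hz => by simp [h1 z hz])
    simp [h3, List.dropWhile_cons, h2]

omit [DecidableEq V] in
/-- helper: gluing heads -/
lemma head_glue {w x : V} {c t : List V} (t' : List V) (h : w :: t = c ++ x :: t') (t'' : List V) :
    w :: (c ++ x :: t'').tail = c ++ x :: t'' := by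
  cases c with
  | nil => simp_all
  | cons hd tl =>
    have : w = hd := by simpa using congrArg (fun l => l.head?) h
    simp [this]

def badS (P : Fin N → List V) : Finset (Fin N) :=
  Finset.univ.filter fun a => ∃ b, b ≠ a ∧ ∃ x, x ∈ u a :: P a ∧ x ∈ u b :: P b

lemma mem_badS {P : Fin N → List V} {a : Fin N} :
    a ∈ badS u P ↔ ∃ b, b ≠ a ∧ ∃ x, x ∈ u a :: P a ∧ x ∈ u b :: P b := by
  simp [badS]

variable (P : Fin N → List V) (hb : (badS u P).Nonempty)

def a0 : Fin N := (badS u P).min' hb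

def goodB : V → Bool := fun y => decide (∀ c, c ≠ a0 u P hb → y ∉ u c :: P c)

lemma goodB_true_iff {y : V} :
    goodB u P hb y = true ↔ ∀ c, c ≠ a0 u P hb → y ∉ u c :: P c := by
  simp [goodB]

lemma goodB_false_iff {y : V} :
    goodB u P hb y = false ↔ ∃ c, c ≠ a0 u P hb ∧ y ∈ u c :: P c := by
  rw [goodB, decide_eq_false_iff_not]
  push_neg
  rfl

def qa : List V := (u (a0 u P hb) :: P (a0 u P hb)).takeWhile (goodB u P hb)
def ra : List V := (u (a0 u P hb) :: P (a0 u P hb)).dropWhile (goodB u P hb)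

lemma qa_eq : qa u P hb = (u (a0 u P hb) :: P (a0 u P hb)).takeWhile (goodB u P hb) := rfl
lemma ra_eq : ra u P hb = (u (a0 u P hb) :: P (a0 u P hb)).dropWhile (goodB u P hb) := rfl

lemma qa_ra_append : qa u P hb ++ ra u P hb = u (a0 u P hb) :: P (a0 u P hb) := by
  rw [qa_eq, ra_eq]; exact List.takeWhile_append_dropWhile

lemma a0_mem : a0 u P hb ∈ badS u P := (badS u P).min'_mem hb

lemma ra_ne_nil : ra u P hb ≠ [] := by
  intro hra
  have hsplit := qa_ra_append u P hb
  rw [hra, List.append_nil] at hsplit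
  rcases (mem_badS u).mp (a0_mem u P hb) with ⟨b, hba, x, hxa, hxb⟩
  have hx : x ∈ qa u P hb := by rw [hsplit]; exact hxa
  rw [qa_eq] at hx
  have := (goodB_true_iff u P hb).mp (List.mem_takeWhile_imp hx)
  exact this b hba hxb

def x0 : V := (ra u P hb).head (ra_ne_nil u P hb)

lemma x0_bad : ∃ c, c ≠ a0 u P hb ∧ x0 u P hb ∈ u c :: P c := by
  have h2 := List.head_dropWhile_not (goodB u P hb)
    (l := u (a0 u P hb) :: P (a0 u P hb)) (ra_ne_nil u P hb)
  exact (goodB_false_iff u P hb).mp h2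

lemma split_a : u (a0 u P hb) :: P (a0 u P hb) = qa u P hb ++ x0 u P hb :: (ra u P hb).tail := by
  have h1 : x0 u P hb :: (ra u P hb).tail = ra u P hb :=
    List.cons_head_tail (ra_ne_nil u P hb)
  rw [h1, qa_ra_append]

lemma qa_good : ∀ y ∈ qa u P hb, ∀ c, c ≠ a0 u P hb → y ∉ u c :: P c := by
  intro y hy
  rw [qa_eq] at hy
  exact (goodB_true_iff u P hb).mp (List.mem_takeWhile_imp hy)

lemma x0_mem_a : x0 u P hb ∈ u (a0 u P hb) :: P (a0 u P hb) := by
  rw [split_a u P hb]; exact List.mem_append_right _ (List.mem_cons_self)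

def bS : Finset (Fin N) :=
  Finset.univ.filter fun c => c ≠ a0 u P hb ∧ x0 u P hb ∈ u c :: P c

lemma mem_bS {c : Fin N} : c ∈ bS u P hb ↔ c ≠ a0 u P hb ∧ x0 u P hb ∈ u c :: P c := by
  simp [bS]

lemma bS_nonempty : (bS u P hb).Nonempty := by
  rcases x0_bad u P hb with ⟨c, hc, hx⟩
  exact ⟨c, (mem_bS u P hb).mpr ⟨hc, hx⟩⟩

def b0 : Fin N := (bS u P hb).min' (bS_nonempty u P hb)

lemma b0_mem : b0 u P hb ∈ bS u P hb := (bS u P hb).min'_mem _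

lemma b0_ne_a0 : b0 u P hb ≠ a0 u P hb := ((mem_bS u P hb).mp (b0_mem u P hb)).1

lemma x0_mem_b : x0 u P hb ∈ u (b0 u P hb) :: P (b0 u P hb) :=
  ((mem_bS u P hb).mp (b0_mem u P hb)).2

def qb : List V := (u (b0 u P hb) :: P (b0 u P hb)).takeWhile (fun y => decide (y ≠ x0 u P hb))
def rb : List V := (u (b0 u P hb) :: P (b0 u P hb)).dropWhile (fun y => decide (y ≠ x0 u P hb))

lemma qb_eq : qb u P hb
    = (u (b0 u P hb) :: P (b0 u P hb)).takeWhile (fun y => decide (y ≠ x0 u P hb)) := rfl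
lemma rb_eq : rb u P hb
    = (u (b0 u P hb) :: P (b0 u P hb)).dropWhile (fun y => decide (y ≠ x0 u P hb)) := rfl

lemma qb_rb_append : qb u P hb ++ rb u P hb = u (b0 u P hb) :: P (b0 u P hb) := by
  rw [qb_eq, rb_eq]; exact List.takeWhile_append_dropWhile

lemma rb_ne_nil : rb u P hb ≠ [] := by
  intro h
  have hsplit := qb_rb_append u P hb
  rw [h, List.append_nil] at hsplit
  have hx : x0 u P hb ∈ qb u P hb := by rw [hsplit]; exact x0_mem_b u P hb
  rw [qb_eq] at hx
  have := List.mem_takeWhile_imp hx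
  simp at this

lemma rb_head : (rb u P hb).head (rb_ne_nil u P hb) = x0 u P hb := by
  by_contra hne
  have h2 := List.head_dropWhile_not (fun y => decide (y ≠ x0 u P hb))
    (l := u (b0 u P hb) :: P (b0 u P hb)) (rb_ne_nil u P hb)
  rw [decide_eq_false_iff_not] at h2
  exact h2 hne

lemma split_b : u (b0 u P hb) :: P (b0 u P hb) = qb u P hb ++ x0 u P hb :: (rb u P hb).tail := by
  have h1 : x0 u P hb :: (rb u P hb).tail = rb u P hb := by
    rw [← rb_head u P hb]
    exact List.cons_head_tail (rb_ne_nil u P hb)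
  rw [h1, qb_rb_append]

lemma qb_ne : ∀ y ∈ qb u P hb, y ≠ x0 u P hb := by
  intro y hy
  rw [qb_eq] at hy
  have := List.mem_takeWhile_imp hy
  simpa using this

lemma b0_mem_badS : b0 u P hb ∈ badS u P :=
  (mem_badS u).mpr ⟨a0 u P hb, Ne.symm (b0_ne_a0 u P hb),
    x0 u P hb, x0_mem_b u P hb, x0_mem_a u P hb⟩

lemma a0_lt_b0 : a0 u P hb < b0 u P hb :=
  lt_of_le_of_ne ((badS u P).min'_le _ (b0_mem_badS u P hb)) (Ne.symm (b0_ne_a0 u P hb))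

def newP : Fin N → List V :=
  Function.update (Function.update P (a0 u P hb) ((qa u P hb ++ x0 u P hb :: (rb u P hb).tail).tail))
    (b0 u P hb) ((qb u P hb ++ x0 u P hb :: (ra u P hb).tail).tail)

lemma newP_a0 : newP u P hb (a0 u P hb) = (qa u P hb ++ x0 u P hb :: (rb u P hb).tail).tail := by
  rw [newP, Function.update_of_ne (b0_ne_a0 u P hb).symm, Function.update_self]

lemma newP_b0 : newP u P hb (b0 u P hb) = (qb u P hb ++ x0 u P hb :: (ra u P hb).tail).tail := by
  rw [newP, Function.update_self]

lemma newP_other {c : Fin N} (h1 : c ≠ a0 u P hb) (h2 : c ≠ b0 u P hb) : newP u P hb c = P c := by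
  rw [newP, Function.update_of_ne h2, Function.update_of_ne h1]

lemma newL_a0 : u (a0 u P hb) :: newP u P hb (a0 u P hb)
    = qa u P hb ++ x0 u P hb :: (rb u P hb).tail := by
  rw [newP_a0]
  exact head_glue _ (split_a u P hb) _

lemma newL_b0 : u (b0 u P hb) :: newP u P hb (b0 u P hb)
    = qb u P hb ++ x0 u P hb :: (ra u P hb).tail := by
  rw [newP_b0]
  exact head_glue _ (split_b u P hb) _

end Sel
section Invol
variable [DecidableEq V] {N : ℕ} (u : Fin N → V) (P : Fin N → List V) (hb : (badS u P).Nonempty)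

lemma x0_mem_newL_a0 : x0 u P hb ∈ u (a0 u P hb) :: newP u P hb (a0 u P hb) := by
  rw [newL_a0]; exact List.mem_append_right _ (List.mem_cons_self)

lemma x0_mem_newL_b0 : x0 u P hb ∈ u (b0 u P hb) :: newP u P hb (b0 u P hb) := by
  rw [newL_b0]; exact List.mem_append_right _ (List.mem_cons_self)

lemma a0_mem_badS_new : a0 u P hb ∈ badS u (newP u P hb) :=
  (mem_badS u).mpr ⟨b0 u P hb, b0_ne_a0 u P hb, x0 u P hb,
    x0_mem_newL_a0 u P hb, x0_mem_newL_b0 u P hb⟩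

lemma badS_new_nonempty : (badS u (newP u P hb)).Nonempty := ⟨_, a0_mem_badS_new u P hb⟩

lemma mem_qa_sub {x : V} (h : x ∈ qa u P hb) : x ∈ u (a0 u P hb) :: P (a0 u P hb) := by
  rw [split_a u P hb]; exact List.mem_append_left _ h

lemma mem_sufa_sub {x : V} (h : x ∈ x0 u P hb :: (ra u P hb).tail) :
    x ∈ u (a0 u P hb) :: P (a0 u P hb) := by
  rw [split_a u P hb]; exact List.mem_append_right _ h

lemma mem_qb_sub {x : V} (h : x ∈ qb u P hb) : x ∈ u (b0 u P hb) :: P (b0 u P hb) := by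
  rw [split_b u P hb]; exact List.mem_append_left _ h

lemma mem_sufb_sub {x : V} (h : x ∈ x0 u P hb :: (rb u P hb).tail) :
    x ∈ u (b0 u P hb) :: P (b0 u P hb) := by
  rw [split_b u P hb]; exact List.mem_append_right _ h

lemma a0_le_badS_new : ∀ c ∈ badS u (newP u P hb), a0 u P hb ≤ c := by
  intro c hc
  by_contra hlt
  push_neg at hlt
  have hca : c ≠ a0 u P hb := ne_of_lt hlt
  have hcb : c ≠ b0 u P hb := ne_of_lt (hlt.trans (a0_lt_b0 u P hb))
  have hcP : c ∉ badS u P := fun h => absurd ((badS u P).min'_le c h) (not_le.mpr hlt)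
  apply hcP
  rcases (mem_badS u).mp hc with ⟨d, hdc, x, hxc, hxd⟩
  rw [newP_other u P hb hca hcb] at hxc
  by_cases hda : d = a0 u P hb
  · subst hda
    rw [newL_a0] at hxd
    rcases List.mem_append.mp hxd with h | h
    · exact (mem_badS u).mpr ⟨a0 u P hb, hdc, x, hxc, mem_qa_sub u P hb h⟩
    · exact (mem_badS u).mpr ⟨b0 u P hb, fun h' => hcb h'.symm, x, hxc, mem_sufb_sub u P hb h⟩
  · by_cases hdb : d = b0 u P hb
    · subst hdb
      rw [newL_b0] at hxd
      rcases List.mem_append.mp hxd with h | h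
      · exact (mem_badS u).mpr ⟨b0 u P hb, hdc, x, hxc, mem_qb_sub u P hb h⟩
      · exact (mem_badS u).mpr ⟨a0 u P hb, fun h' => hca h'.symm, x, hxc, mem_sufa_sub u P hb h⟩
    · rw [newP_other u P hb hda hdb] at hxd
      exact (mem_badS u).mpr ⟨d, hdc, x, hxc, hxd⟩

lemma a0_new : a0 u (newP u P hb) (badS_new_nonempty u P hb) = a0 u P hb :=
  le_antisymm ((badS u (newP u P hb)).min'_le _ (a0_mem_badS_new u P hb))
    (a0_le_badS_new u P hb _ ((badS u (newP u P hb)).min'_mem _))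

lemma qa_good_new (hL : (u (a0 u P hb) :: P (a0 u P hb)).Nodup) : ∀ y ∈ qa u P hb,
    goodB u (newP u P hb) (badS_new_nonempty u P hb) y = true := by
  intro y hy
  rw [goodB_true_iff, a0_new]
  intro c hc
  have hgood := qa_good u P hb y hy
  by_cases hcb : c = b0 u P hb
  · subst hcb
    rw [newL_b0]
    intro hmem
    rcases List.mem_append.mp hmem with h | h
    · exact hgood _ (b0_ne_a0 u P hb) (mem_qb_sub u P hb h)
    · -- y ∈ x0 :: ra.tail contradicts nodup of L a0
      have hnd := hL
      rw [split_a u P hb] at hnd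
      exact (List.disjoint_of_nodup_append hnd) hy h
  · rw [newP_other u P hb hc hcb]
    exact hgood c hc

lemma x0_bad_new :
    goodB u (newP u P hb) (badS_new_nonempty u P hb) (x0 u P hb) = false := by
  rw [goodB_false_iff, a0_new]
  exact ⟨b0 u P hb, b0_ne_a0 u P hb, x0_mem_newL_b0 u P hb⟩

lemma qa_new (hL : (u (a0 u P hb) :: P (a0 u P hb)).Nodup) : qa u (newP u P hb) (badS_new_nonempty u P hb) = qa u P hb := by
  rw [qa_eq, a0_new, newL_a0]
  exact (takeWhile_split _ (qa_good_new u P hb hL) (x0_bad_new u P hb)).1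

lemma ra_new (hL : (u (a0 u P hb) :: P (a0 u P hb)).Nodup) : ra u (newP u P hb) (badS_new_nonempty u P hb)
    = x0 u P hb :: (rb u P hb).tail := by
  rw [ra_eq, a0_new, newL_a0]
  exact (takeWhile_split _ (qa_good_new u P hb hL) (x0_bad_new u P hb)).2

lemma x0_new (hL : (u (a0 u P hb) :: P (a0 u P hb)).Nodup) : x0 u (newP u P hb) (badS_new_nonempty u P hb) = x0 u P hb := by
  have h := (List.cons_head_tail
    (ra_ne_nil u (newP u P hb) (badS_new_nonempty u P hb))).trans (ra_new u P hb hL)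
  exact ((List.cons.injEq _ _ _ _).mp h).1

lemma bS_new (hL : (u (a0 u P hb) :: P (a0 u P hb)).Nodup) : bS u (newP u P hb) (badS_new_nonempty u P hb) = bS u P hb := by
  ext c
  rw [mem_bS, mem_bS, a0_new, x0_new u P hb hL]
  constructor
  · rintro ⟨hca, hx⟩
    refine ⟨hca, ?_⟩
    by_cases hcb : c = b0 u P hb
    · subst hcb; exact x0_mem_b u P hb
    · rwa [newP_other u P hb hca hcb] at hx
  · rintro ⟨hca, hx⟩
    refine ⟨hca, ?_⟩
    by_cases hcb : c = b0 u P hb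
    · subst hcb; exact x0_mem_newL_b0 u P hb
    · rwa [newP_other u P hb hca hcb]

lemma b0_new (hL : (u (a0 u P hb) :: P (a0 u P hb)).Nodup) : b0 u (newP u P hb) (badS_new_nonempty u P hb) = b0 u P hb := by
  simp only [b0, bS_new u P hb hL]

lemma qb_new (hL : (u (a0 u P hb) :: P (a0 u P hb)).Nodup) : qb u (newP u P hb) (badS_new_nonempty u P hb) = qb u P hb := by
  rw [qb_eq, b0_new u P hb hL, x0_new u P hb hL, newL_b0]
  refine (takeWhile_split _ ?_ (by simp)).1
  intro z hz
  simpa using qb_ne u P hb z hz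

lemma rb_new (hL : (u (a0 u P hb) :: P (a0 u P hb)).Nodup) : rb u (newP u P hb) (badS_new_nonempty u P hb)
    = x0 u P hb :: (ra u P hb).tail := by
  rw [rb_eq, b0_new u P hb hL, x0_new u P hb hL, newL_b0]
  refine (takeWhile_split _ ?_ (by simp)).2
  intro z hz
  simpa using qb_ne u P hb z hz

lemma newP_invol (hL : (u (a0 u P hb) :: P (a0 u P hb)).Nodup) : newP u (newP u P hb) (badS_new_nonempty u P hb) = P := by
  rw [newP, a0_new, b0_new u P hb hL, qa_new u P hb hL, x0_new u P hb hL,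
    rb_new u P hb hL, qb_new u P hb hL, ra_new u P hb hL]
  simp only [List.tail_cons]
  rw [← split_a u P hb, ← split_b u P hb]
  funext c
  by_cases hcb : c = b0 u P hb
  · subst hcb; rw [Function.update_self, List.tail_cons]
  · rw [Function.update_of_ne hcb]
    by_cases hca : c = a0 u P hb
    · subst hca; rw [Function.update_self, List.tail_cons]
    · rw [Function.update_of_ne hca, newP_other u P hb hca hcb]

end Invol
section Path
variable [DecidableEq V] {N : ℕ} (u : Fin N → V) (P : Fin N → List V) (hb : (badS u P).Nonempty)

lemma isDiPath_iff {E : V → V → Prop} {a b : V} {p : List V} :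
    IsDiPath E a b p ↔ List.Chain' E (a :: p) ∧ (a :: p).getLast? = some b := by
  unfold IsDiPath
  have h := List.getLast?_eq_getLast (l := a :: p) (by simp)
  constructor
  · rintro ⟨h1, h2⟩; exact ⟨h1, by rw [h, h2]⟩
  · rintro ⟨h1, h2⟩
    refine ⟨h1, ?_⟩
    rw [h] at h2
    exact Option.some.inj h2

lemma diPath_new_a {E : V → V → Prop} {wa wb : V}
    (ha : IsDiPath E (u (a0 u P hb)) wa (P (a0 u P hb)))
    (hbp : IsDiPath E (u (b0 u P hb)) wb (P (b0 u P hb))) :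
    IsDiPath E (u (a0 u P hb)) wb (newP u P hb (a0 u P hb)) := by
  rw [isDiPath_iff] at ha hbp ⊢
  rw [newL_a0]
  rw [split_a u P hb] at ha
  rw [split_b u P hb] at hbp
  obtain ⟨ca, la⟩ := ha
  obtain ⟨cb, lb⟩ := hbp
  rcases List.isChain_append.mp ca with ⟨c1, _, c3⟩
  rcases List.isChain_append.mp cb with ⟨_, d2, _⟩
  refine ⟨List.isChain_append.mpr ⟨c1, d2, ?_⟩, ?_⟩
  · intro z hz y hy
    simp only [List.head?_cons, Option.mem_some_iff] at hy
    subst hy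
    exact c3 z hz _ (by simp)
  · rw [List.getLast?_append_cons] at lb ⊢
    exact lb

lemma diPath_new_b {E : V → V → Prop} {wa wb : V}
    (ha : IsDiPath E (u (a0 u P hb)) wa (P (a0 u P hb)))
    (hbp : IsDiPath E (u (b0 u P hb)) wb (P (b0 u P hb))) :
    IsDiPath E (u (b0 u P hb)) wa (newP u P hb (b0 u P hb)) := by
  rw [isDiPath_iff] at ha hbp ⊢
  rw [newL_b0]
  rw [split_a u P hb] at ha
  rw [split_b u P hb] at hbp
  obtain ⟨ca, la⟩ := ha
  obtain ⟨cb, lb⟩ := hbp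
  rcases List.isChain_append.mp ca with ⟨_, c2, _⟩
  rcases List.isChain_append.mp cb with ⟨d1, _, d3⟩
  refine ⟨List.isChain_append.mpr ⟨d1, c2, ?_⟩, ?_⟩
  · intro z hz y hy
    simp only [List.head?_cons, Option.mem_some_iff] at hy
    subst hy
    exact d3 z hz _ (by simp)
  · rw [List.getLast?_append_cons] at la ⊢
    exact la

lemma weight_prod_new (ω : V → V → ℝ) :
    ∏ a, pathWeight ω (u a) (newP u P hb a) = ∏ a, pathWeight ω (u a) (P a) := by
  have hA : (a0 u P hb) ∈ (Finset.univ : Finset (Fin N)) := Finset.mem_univ _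
  have hB : (b0 u P hb) ∈ Finset.univ.erase (a0 u P hb) :=
    Finset.mem_erase.mpr ⟨b0_ne_a0 u P hb, Finset.mem_univ _⟩
  rw [← Finset.mul_prod_erase Finset.univ (fun a => pathWeight ω (u a) (newP u P hb a)) hA,
      ← Finset.mul_prod_erase _ (fun a => pathWeight ω (u a) (newP u P hb a)) hB,
      ← Finset.mul_prod_erase Finset.univ (fun a => pathWeight ω (u a) (P a)) hA,
      ← Finset.mul_prod_erase _ (fun a => pathWeight ω (u a) (P a)) hB]
  have hrest : ∏ c ∈ (Finset.univ.erase (a0 u P hb)).erase (b0 u P hb),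
      pathWeight ω (u c) (newP u P hb c)
      = ∏ c ∈ (Finset.univ.erase (a0 u P hb)).erase (b0 u P hb), pathWeight ω (u c) (P c) := by
    refine Finset.prod_congr rfl (fun c hc => ?_)
    rcases Finset.mem_erase.mp hc with ⟨hc1, hc2⟩
    rcases Finset.mem_erase.mp hc2 with ⟨hc3, _⟩
    rw [newP_other u P hb hc3 hc1]
  rw [hrest]
  have e1 : pathWeight ω (u (a0 u P hb)) (newP u P hb (a0 u P hb))
      = W ω (qa u P hb ++ x0 u P hb :: (rb u P hb).tail) := by
    rw [pathWeight_eq, newL_a0]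
  have e2 : pathWeight ω (u (b0 u P hb)) (newP u P hb (b0 u P hb))
      = W ω (qb u P hb ++ x0 u P hb :: (ra u P hb).tail) := by
    rw [pathWeight_eq, newL_b0]
  have e3 : pathWeight ω (u (a0 u P hb)) (P (a0 u P hb))
      = W ω (qa u P hb ++ x0 u P hb :: (ra u P hb).tail) := by
    rw [pathWeight_eq, split_a u P hb]
  have e4 : pathWeight ω (u (b0 u P hb)) (P (b0 u P hb))
      = W ω (qb u P hb ++ x0 u P hb :: (rb u P hb).tail) := by
    rw [pathWeight_eq, split_b u P hb]
  rw [e1, e2, e3, e4, W_append ω (x0 u P hb) (qa u P hb) ((rb u P hb).tail),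
      W_append ω (x0 u P hb) (qb u P hb) ((ra u P hb).tail),
      W_append ω (x0 u P hb) (qa u P hb) ((ra u P hb).tail),
      W_append ω (x0 u P hb) (qb u P hb) ((rb u P hb).tail)]
  ring

end Path
end LGVAux

/-! STATEMENT 19 (Lindström–Gessel–Viennot): for a finite directed acyclic graph with
positive real edge weights and vertices u_1,…,u_N, v_1,…,v_N, the determinant of the
path matrix C, C_{jk} = Σ over paths P : u_k → v_j of ω(P), equals the signed sum over
vertex-disjoint path systems: det C = Σ_{P vertex-disjoint} sgn(σ_P)·ω(P). -/
open LGVAux in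
theorem lindstrom_gessel_viennot {V : Type*} [Fintype V]
    (E : V → V → Prop) (hacyc : Irreflexive (Relation.TransGen E))
    (ω : V → V → ℝ) (hpos : ∀ a b, E a b → 0 < ω a b)
    (N : ℕ) (u v : Fin N → V) :
    (Matrix.of fun j k : Fin N =>
        ∑ᶠ p ∈ {p : List V | IsDiPath E (u k) (v j) p}, pathWeight ω (u k) p).det =
      ∑ᶠ P ∈ {P : Equiv.Perm (Fin N) × (Fin N → List V) |
          (∀ a, IsDiPath E (u a) (v (P.1 a)) (P.2 a)) ∧
          ∀ a b, a ≠ b → ∀ x, x ∈ u a :: P.2 a → x ∉ u b :: P.2 b},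
        ((Equiv.Perm.sign P.1 : ℤ) : ℝ) * ∏ a, pathWeight ω (u a) (P.2 a) := by
  classical
  -- the finset of paths from a to b
  set F : V → V → Finset (List V) := fun a b => (LGVAux.paths_finite hacyc a b).toFinset with hF
  have hmemF : ∀ (a b : V) (p : List V), p ∈ F a b ↔ IsDiPath E a b p := by
    intro a b p
    rw [hF]
    simp [Set.Finite.mem_toFinset]
  have hent : ∀ j k : Fin N,
      (∑ᶠ p ∈ {p : List V | IsDiPath E (u k) (v j) p}, pathWeight ω (u k) p)
        = ∑ p ∈ F (u k) (v j), pathWeight ω (u k) p := by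
    intro j k
    rw [hF, ← finsum_mem_coe_finset, Set.Finite.coe_toFinset]
  -- the sigma finset of all path systems
  set Sg : Finset ((_ : Equiv.Perm (Fin N)) × (Fin N → List V)) :=
    (Finset.univ : Finset (Equiv.Perm (Fin N))).sigma
      (fun σ => Fintype.piFinset fun i => F (u i) (v (σ i))) with hSg
  have hmemSg : ∀ s : (_ : Equiv.Perm (Fin N)) × (Fin N → List V),
      s ∈ Sg ↔ ∀ a, IsDiPath E (u a) (v (s.1 a)) (s.2 a) := by
    rintro ⟨σ, Pf⟩
    rw [hSg, Finset.mem_sigma]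
    simp only [Finset.mem_univ, true_and, Fintype.mem_piFinset]
    exact forall_congr' fun a => hmemF _ _ _
  set f : ((_ : Equiv.Perm (Fin N)) × (Fin N → List V)) → ℝ :=
    fun s => ((Equiv.Perm.sign s.1 : ℤ) : ℝ) * ∏ a, pathWeight ω (u a) (s.2 a) with hf
  set dis : ((_ : Equiv.Perm (Fin N)) × (Fin N → List V)) → Prop :=
    fun s => ∀ a b, a ≠ b → ∀ x, x ∈ u a :: s.2 a → x ∉ u b :: s.2 b with hdis
  -- LHS
  have lhs_eq : (Matrix.of fun j k : Fin N =>
      ∑ᶠ p ∈ {p : List V | IsDiPath E (u k) (v j) p}, pathWeight ω (u k) p).det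
      = ∑ s ∈ Sg, f s := by
    rw [Matrix.det_apply]
    have : ∀ σ : Equiv.Perm (Fin N),
        Equiv.Perm.sign σ • ∏ i, (Matrix.of fun j k : Fin N =>
          ∑ᶠ p ∈ {p : List V | IsDiPath E (u k) (v j) p}, pathWeight ω (u k) p) (σ i) i
        = ∑ P ∈ Fintype.piFinset (fun i => F (u i) (v (σ i))),
            ((Equiv.Perm.sign σ : ℤ) : ℝ) * ∏ a, pathWeight ω (u a) (P a) := by
      intro σ
      have h1 : ∏ i, (Matrix.of fun j k : Fin N =>
          ∑ᶠ p ∈ {p : List V | IsDiPath E (u k) (v j) p}, pathWeight ω (u k) p) (σ i) i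
          = ∑ P ∈ Fintype.piFinset (fun i => F (u i) (v (σ i))),
              ∏ a, pathWeight ω (u a) (P a) := by
        rw [← Finset.prod_univ_sum]
        refine Finset.prod_congr rfl fun i _ => ?_
        rw [Matrix.of_apply, hent]
      rw [h1, Finset.smul_sum]
      refine Finset.sum_congr rfl fun P _ => ?_
      rw [Units.smul_def, zsmul_eq_mul]
    rw [Finset.sum_congr rfl fun σ _ => this σ, Finset.sum_sigma' Finset.univ
      (fun σ => Fintype.piFinset fun i => F (u i) (v (σ i)))
      (fun σ P => ((Equiv.Perm.sign σ : ℤ) : ℝ) * ∏ a, pathWeight ω (u a) (P a))]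
  rw [lhs_eq, ← Finset.sum_filter_add_sum_filter_not Sg dis f]
  -- the non-disjoint part sums to zero via the tail-swap involution
  have hbad : ∀ s ∈ Sg.filter (fun s => ¬ dis s), (badS u s.2).Nonempty := by
    intro s hs
    rcases Finset.mem_filter.mp hs with ⟨_, hnd⟩
    have hnd' : ¬ (∀ a b, a ≠ b → ∀ x, x ∈ u a :: s.2 a → x ∉ u b :: s.2 b) := by
      simpa [hdis] using hnd
    push_neg at hnd'
    rcases hnd' with ⟨a, b, hab, x, hxa, hxb⟩
    exact ⟨a, (mem_badS u).mpr ⟨b, Ne.symm hab, x, hxa, hxb⟩⟩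
  have hzero : ∑ s ∈ Sg.filter (fun s => ¬ dis s), f s = 0 := by
    refine Finset.sum_involution
      (fun s hs => ⟨s.1 * Equiv.swap (a0 u s.2 (hbad s hs)) (b0 u s.2 (hbad s hs)),
        newP u s.2 (hbad s hs)⟩) ?_ ?_ ?_ ?_
    · -- f s + f (g s) = 0
      intro s hs
      set hb := hbad s hs
      rw [hf]
      simp only
      rw [weight_prod_new u s.2 hb ω, Equiv.Perm.sign_mul,
        Equiv.Perm.sign_swap (Ne.symm (b0_ne_a0 u s.2 hb))]
      simp only [Units.val_mul, Units.val_neg, Units.val_one, Int.cast_mul, Int.cast_neg,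
        Int.cast_one]
      ring
    · -- g s ≠ s
      intro s hs _
      intro h
      have h1 := congrArg Sigma.fst h
      simp only at h1
      have h2 : s.1 * Equiv.swap (a0 u s.2 (hbad s hs)) (b0 u s.2 (hbad s hs)) = s.1 * 1 := by
        rw [mul_one]; exact h1
      have h3 := mul_left_cancel h2
      rw [Equiv.swap_eq_one_iff] at h3
      exact b0_ne_a0 u s.2 (hbad s hs) h3.symm
    · -- g s ∈ filter
      intro s hs
      set hb := hbad s hs
      have hmem := (hmemSg s).mp (Finset.mem_filter.mp hs).1
      refine Finset.mem_filter.mpr ⟨(hmemSg _).mpr ?_, ?_⟩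
      · intro a
        simp only
        by_cases ha : a = a0 u s.2 hb
        · subst ha
          rw [Equiv.Perm.mul_apply, Equiv.swap_apply_left]
          exact diPath_new_a u s.2 hb (hmem _) (hmem _)
        · by_cases hbb : a = b0 u s.2 hb
          · subst hbb
            rw [Equiv.Perm.mul_apply, Equiv.swap_apply_right]
            exact diPath_new_b u s.2 hb (hmem _) (hmem _)
          · rw [Equiv.Perm.mul_apply, Equiv.swap_apply_of_ne_of_ne ha hbb,
              newP_other u s.2 hb ha hbb]
            exact hmem a
      · intro hcontra
        exact hcontra (a0 u s.2 hb) (b0 u s.2 hb) (Ne.symm (b0_ne_a0 u s.2 hb)) (x0 u s.2 hb)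
          (x0_mem_newL_a0 u s.2 hb) (x0_mem_newL_b0 u s.2 hb)
    · -- involutivity
      intro s hs
      have hmem := (hmemSg s).mp (Finset.mem_filter.mp hs).1
      have hL : (u (a0 u s.2 (hbad s hs)) :: s.2 (a0 u s.2 (hbad s hs))).Nodup :=
        LGVAux.nodup_of_chain hacyc (hmem (a0 u s.2 (hbad s hs))).1
      have ha0 : ∀ (h : (badS u (newP u s.2 (hbad s hs))).Nonempty),
          a0 u (newP u s.2 (hbad s hs)) h = a0 u s.2 (hbad s hs) :=
        fun _ => a0_new u s.2 (hbad s hs)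
      have hb0 : ∀ (h : (badS u (newP u s.2 (hbad s hs))).Nonempty),
          b0 u (newP u s.2 (hbad s hs)) h = b0 u s.2 (hbad s hs) :=
        fun _ => b0_new u s.2 (hbad s hs) hL
      have hP : ∀ (h : (badS u (newP u s.2 (hbad s hs))).Nonempty),
          newP u (newP u s.2 (hbad s hs)) h = s.2 :=
        fun _ => newP_invol u s.2 (hbad s hs) hL
      refine Sigma.ext ?_ (heq_of_eq ?_)
      · simp only
        rw [ha0, hb0, mul_assoc, Equiv.swap_mul_self, mul_one]
      · simp only
        rw [hP]
  rw [hzero, add_zero]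
  -- the disjoint part equals the RHS finsum
  set T : Finset (Equiv.Perm (Fin N) × (Fin N → List V)) :=
    (Sg.filter dis).image (fun s => (s.1, s.2)) with hT
  have hTset : {P : Equiv.Perm (Fin N) × (Fin N → List V) |
      (∀ a, IsDiPath E (u a) (v (P.1 a)) (P.2 a)) ∧
      ∀ a b, a ≠ b → ∀ x, x ∈ u a :: P.2 a → x ∉ u b :: P.2 b} = ↑T := by
    ext x
    obtain ⟨σ, Pf⟩ := x
    simp only [Set.mem_setOf_eq, hT, Finset.coe_image, Set.mem_image, Finset.mem_coe,
      Finset.mem_filter]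
    constructor
    · rintro ⟨h1, h2⟩
      exact ⟨⟨σ, Pf⟩, ⟨(hmemSg ⟨σ, Pf⟩).mpr h1, h2⟩, rfl⟩
    · rintro ⟨⟨σ', Pf'⟩, ⟨hm, hd⟩, heq⟩
      have e1 : σ' = σ := congrArg Prod.fst heq
      have e2 : Pf' = Pf := congrArg Prod.snd heq
      subst e1; subst e2
      exact ⟨(hmemSg _).mp hm, hd⟩
  have hinj : ∀ x ∈ Sg.filter dis, ∀ y ∈ Sg.filter dis,
      (x.1, x.2) = (y.1, y.2) → x = y := by
    rintro ⟨x1, x2⟩ _ ⟨y1, y2⟩ _ h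
    obtain rfl : x1 = y1 := congrArg Prod.fst h
    obtain rfl : x2 = y2 := congrArg Prod.snd h
    rfl
  rw [hTset, finsum_mem_coe_finset, hT, Finset.sum_image hinj]
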